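/- Let ε ≥ 0 and l : (0,1) → ℝ be a logarithmic function (l(xy) = l(x) + l(y) whenever x, y, xy ∈ (0,1)) satisfying |l(x) − l(1−x)| ≤ ε for all x ∈ (0,1). Then the extension of l to a logarithmic function on ℝ₊₊ via l(p) = l(x) − l(1−x) for x = p/(p+1) is bounded by ε, hence l is identically zero on (0,1). -/

import Mathlib

open Set

/-- A logarithmic function on (0,1) that is approximately symmetric to 1/2 is
bounded (via its extension to the positive reals), hence identically zero. -/
theorem stmt_16 (ε : ℝ) (hε : 0 ≤ ε) (l : ℝ → ℝ)
    (hlog : ∀ x y : ℝ, x ∈ Ioo (0 : ℝ) 1 → y ∈ Ioo (0 : ℝ) 1 →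
      x * y ∈ Ioo (0 : ℝ) 1 → l (x * y) = l x + l y)
    (hsym : ∀ x ∈ Ioo (0 : ℝ) 1, |l x - l (1 - x)| ≤ ε) :
    (∀ p : ℝ, 0 < p → |l (p / (p + 1)) - l (1 - p / (p + 1))| ≤ ε) ∧
      ∀ x ∈ Ioo (0 : ℝ) 1, l x = 0 := by
  have hmem : ∀ p : ℝ, 0 < p → p / (p + 1) ∈ Ioo (0 : ℝ) 1 := by
    intro p hp
    have h1 : (0:ℝ) < p + 1 := by linarith
    constructor
    · positivity
    · rw [div_lt_one h1]; linarith
  refine ⟨fun p hp => hsym _ (hmem p hp), ?_⟩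
  -- bound: |l p| ≤ ε for p ∈ (0,1)
  have hbound : ∀ p ∈ Ioo (0:ℝ) 1, |l p| ≤ ε := by
    intro p hp
    have hp1 : (0:ℝ) < p + 1 := by linarith [hp.1]
    have hinv : (1 / (p + 1) : ℝ) ∈ Ioo (0:ℝ) 1 := by
      constructor
      · positivity
      · rw [div_lt_one hp1]; linarith [hp.1]
    have hx := hmem p hp.1
    have hmul : p * (1 / (p + 1)) = p / (p + 1) := by ring
    have h1x : 1 - p / (p + 1) = 1 / (p + 1) := by field_simp; ring
    have heq := hlog p (1 / (p + 1)) hp hinv (by rw [hmul]; exact hx)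
    rw [hmul] at heq
    have := hsym _ hx
    rw [h1x] at this
    have : |l p| ≤ ε := by rw [show l p = l (p / (p+1)) - l (1/(p+1)) by linarith]; exact this
    exact this
  intro x hx
  -- powers: l (x^(n+1)) = (n+1) * l x
  have hxpow : ∀ n : ℕ, x ^ (n+1) ∈ Ioo (0:ℝ) 1 := by
    intro n
    exact ⟨pow_pos hx.1 _, pow_lt_one₀ hx.1.le hx.2 (Nat.succ_ne_zero n)⟩
  have hpow : ∀ n : ℕ, l (x ^ (n+1)) = (n+1) * l x := by
    intro n
    induction n with
    | zero => simp
    | succ k ih =>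
      have : x ^ (k+2) = x ^ (k+1) * x := by ring
      rw [this, hlog _ x (hxpow k) hx (by rw [← this]; exact hxpow (k+1)), ih]
      push_cast; ring
  by_contra hne
  have habs : 0 < |l x| := abs_pos.mpr hne
  obtain ⟨n, hn⟩ := exists_nat_gt (ε / |l x|)
  have h1 : ((n:ℝ)+1) * |l x| ≤ ε := by
    have := hbound _ (hxpow n)
    rw [hpow n, abs_mul, abs_of_nonneg (by positivity : (0:ℝ) ≤ (n:ℝ)+1)] at this
    exact this
  have h2 : ε / |l x| < (n:ℝ) + 1 := by linarith
  rw [div_lt_iff₀ habs] at h2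
  linarith
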